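/- Let N : ℕ, let A, P : Matrix (Fin N) (Fin N) ℝ with P symmetric (P = Pᵀ). Let ρ > 0, μ ∈ (0, ρ), ℓ ≥ 0, w_max ≥ 0, μ* ≥ 1, β > 0, and set θ := μ*·(2ρ+μ) + (ρ−μ) and Γ := μ*²·w_max²/(ρ−μ) + μ*·ℓ²/μ. Assume: (a) μ*·1 − P is positive semidefinite and P is positive semidefinite; (b) the LMI holds: −(Aᵀ*P + P*A) − θ·1 − β·P is positive semidefinite. Then for every x, gv, wv : Fin N → ℝ with ‖gv‖ ≤ ρ·‖x‖ + ℓ and ‖wv‖ ≤ w_max (Euclidean norm), the pointwise derivative bound holds: 2 · ((P *ᵥ x) ⬝ᵥ (A *ᵥ x + gv + wv)) ≤ −β · (x ⬝ᵥ (P *ᵥ x)) + Γ. -/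

import Mathlib

open Matrix

/-- Euclidean norm on `Fin N → ℝ`. -/
noncomputable def eucNorm {N : ℕ} (y : Fin N → ℝ) : ℝ :=
  Real.sqrt (∑ i, y i ^ 2)

lemma eucNorm_nonneg {N : ℕ} (y : Fin N → ℝ) : 0 ≤ eucNorm y := Real.sqrt_nonneg _

lemma eucNorm_sq {N : ℕ} (y : Fin N → ℝ) : eucNorm y ^ 2 = y ⬝ᵥ y := by
  rw [eucNorm, Real.sq_sqrt (by positivity)]
  simp [dotProduct, sq]

/-- Cauchy–Schwarz for a symmetric PSD quadratic form. -/
lemma psd_cauchy_schwarz {N : ℕ} {P : Matrix (Fin N) (Fin N) ℝ} (hPsym : P = Pᵀ)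
    (hP : P.PosSemidef) (x y : Fin N → ℝ) :
    (x ⬝ᵥ (P *ᵥ y)) ^ 2 ≤ (x ⬝ᵥ (P *ᵥ x)) * (y ⬝ᵥ (P *ᵥ y)) := by
  have hsym : ∀ u v : Fin N → ℝ, u ⬝ᵥ (P *ᵥ v) = v ⬝ᵥ (P *ᵥ u) := by
    intro u v
    rw [dotProduct_mulVec, ← mulVec_transpose, ← hPsym, dotProduct_comm]
  have h : ∀ t : ℝ, 0 ≤ (y ⬝ᵥ (P *ᵥ y)) * (t * t) + (2 * (x ⬝ᵥ (P *ᵥ y))) * t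
      + (x ⬝ᵥ (P *ᵥ x)) := by
    intro t
    have h0 := hP.dotProduct_mulVec_nonneg (x + t • y)
    simp only [star_trivial, mulVec_add, mulVec_smul, dotProduct_add, add_dotProduct,
      smul_dotProduct, dotProduct_smul, smul_eq_mul] at h0
    rw [hsym y x] at h0
    ring_nf at h0 ⊢
    linarith
  have hd := discrim_le_zero h
  rw [discrim] at hd
  nlinarith [hd]

lemma young (a b t : ℝ) (ht : 0 < t) : 2 * a * b ≤ t * a ^ 2 + b ^ 2 / t := by
  have h : 0 ≤ (t * a - b) ^ 2 / t := by positivity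
  have e : (t * a - b) ^ 2 / t = t * a^2 - 2*a*b + b^2/t := by
    field_simp; ring
  linarith [e ▸ h]

/-- Pointwise Lyapunov derivative estimate `V̇ ≤ −βV + Γ` along the perturbed
linear dynamics `ẋ = Ax + g + w`, with exact cancellation of the `‖x‖²`
cross-terms via Young's inequality and the LMI. -/
theorem pointwise_lyapunov_derivative_bound (N : ℕ)
    (A P : Matrix (Fin N) (Fin N) ℝ) (hPsym : P = Pᵀ)
    (ρ μ ℓ wmax μs β : ℝ)
    (hρ : 0 < ρ) (hμ : 0 < μ) (hμρ : μ < ρ)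
    (hℓ : 0 ≤ ℓ) (hw : 0 ≤ wmax) (hμs : 1 ≤ μs) (hβ : 0 < β)
    (hPupper : (μs • (1 : Matrix (Fin N) (Fin N) ℝ) - P).PosSemidef)
    (hPpsd : P.PosSemidef)
    (hLMI : (-(Aᵀ * P + P * A)
        - (μs * (2 * ρ + μ) + (ρ - μ)) • (1 : Matrix (Fin N) (Fin N) ℝ)
        - β • P).PosSemidef) :
    ∀ x gv wv : Fin N → ℝ,
      eucNorm gv ≤ ρ * eucNorm x + ℓ → eucNorm wv ≤ wmax →
      2 * ((P *ᵥ x) ⬝ᵥ (A *ᵥ x + gv + wv))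
        ≤ -β * (x ⬝ᵥ (P *ᵥ x))
          + (μs ^ 2 * wmax ^ 2 / (ρ - μ) + μs * ℓ ^ 2 / μ) := by
  intro x gv wv hg hwv
  have hμs0 : (0:ℝ) ≤ μs := le_trans zero_le_one hμs
  have hnx0 := eucNorm_nonneg x
  have hng0 := eucNorm_nonneg gv
  have hnw0 := eucNorm_nonneg wv
  have hX : eucNorm x ^ 2 = x ⬝ᵥ x := eucNorm_sq x
  -- bound on quadratic form: y P y ≤ μs ‖y‖²
  have hquad : ∀ y : Fin N → ℝ, y ⬝ᵥ (P *ᵥ y) ≤ μs * (eucNorm y) ^ 2 := by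
    intro y
    have h0 := hPupper.dotProduct_mulVec_nonneg y
    simp only [star_trivial, sub_mulVec, smul_mulVec, one_mulVec, dotProduct_sub,
      dotProduct_smul, smul_eq_mul] at h0
    rw [eucNorm_sq]
    linarith
  -- |u P v| ≤ μs ‖u‖ ‖v‖
  have hbil : ∀ u v : Fin N → ℝ, u ⬝ᵥ (P *ᵥ v) ≤ μs * eucNorm u * eucNorm v := by
    intro u v
    have hcs := psd_cauchy_schwarz hPsym hPpsd u v
    have hPu := hPpsd.dotProduct_mulVec_nonneg u
    have hPv := hPpsd.dotProduct_mulVec_nonneg v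
    simp only [star_trivial] at hPu hPv
    have hsq : (u ⬝ᵥ (P *ᵥ v)) ^ 2 ≤ (μs * eucNorm u * eucNorm v) ^ 2 := by
      have h3 : (u ⬝ᵥ (P *ᵥ u)) * (v ⬝ᵥ (P *ᵥ v))
          ≤ (μs * eucNorm u ^ 2) * (μs * eucNorm v ^ 2) :=
        mul_le_mul (hquad u) (hquad v) hPv
          (mul_nonneg hμs0 (sq_nonneg _))
      calc (u ⬝ᵥ (P *ᵥ v)) ^ 2 ≤ (u ⬝ᵥ (P *ᵥ u)) * (v ⬝ᵥ (P *ᵥ v)) := hcs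
        _ ≤ (μs * eucNorm u ^ 2) * (μs * eucNorm v ^ 2) := h3
        _ = (μs * eucNorm u * eucNorm v) ^ 2 := by ring
    have hb : 0 ≤ μs * eucNorm u * eucNorm v :=
      mul_nonneg (mul_nonneg hμs0 (eucNorm_nonneg u)) (eucNorm_nonneg v)
    calc u ⬝ᵥ (P *ᵥ v) ≤ |u ⬝ᵥ (P *ᵥ v)| := le_abs_self _
      _ = Real.sqrt ((u ⬝ᵥ (P *ᵥ v))^2) := (Real.sqrt_sq_eq_abs _).symm
      _ ≤ Real.sqrt ((μs * eucNorm u * eucNorm v)^2) := Real.sqrt_le_sqrt hsq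
      _ = μs * eucNorm u * eucNorm v := Real.sqrt_sq hb
  -- LMI consequence
  have hlmi : 2 * ((P *ᵥ x) ⬝ᵥ (A *ᵥ x))
      ≤ -(μs * (2 * ρ + μ) + (ρ - μ)) * (eucNorm x ^ 2) - β * (x ⬝ᵥ (P *ᵥ x)) := by
    have h0 := hLMI.dotProduct_mulVec_nonneg x
    simp only [star_trivial, sub_mulVec, add_mulVec, neg_mulVec, smul_mulVec, one_mulVec,
      dotProduct_sub, dotProduct_add, dotProduct_neg, dotProduct_smul, smul_eq_mul,
      ← mulVec_mulVec] at h0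
    have e1 : x ⬝ᵥ (Aᵀ *ᵥ (P *ᵥ x)) = (A *ᵥ x) ⬝ᵥ (P *ᵥ x) := by
      rw [dotProduct_mulVec, vecMul_transpose]
    have e2 : x ⬝ᵥ (P *ᵥ (A *ᵥ x)) = (P *ᵥ x) ⬝ᵥ (A *ᵥ x) := by
      rw [dotProduct_mulVec, ← mulVec_transpose, ← hPsym]
    have e3 : (A *ᵥ x) ⬝ᵥ (P *ᵥ x) = (P *ᵥ x) ⬝ᵥ (A *ᵥ x) := dotProduct_comm _ _
    rw [hX]
    rw [e1, e2, e3] at h0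
    linarith
  -- transpose trick for the cross terms
  have hPg : (P *ᵥ x) ⬝ᵥ gv = x ⬝ᵥ (P *ᵥ gv) := by
    rw [dotProduct_mulVec, ← mulVec_transpose, ← hPsym, dotProduct_comm, dotProduct_mulVec,
      ← mulVec_transpose, ← hPsym, dotProduct_comm]
  have hPw : (P *ᵥ x) ⬝ᵥ wv = x ⬝ᵥ (P *ᵥ wv) := by
    rw [dotProduct_mulVec, ← mulVec_transpose, ← hPsym, dotProduct_comm, dotProduct_mulVec,
      ← mulVec_transpose, ← hPsym, dotProduct_comm]
  -- g cross term
  have hg' : 2 * ((P *ᵥ x) ⬝ᵥ gv)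
      ≤ μs * (2 * ρ + μ) * eucNorm x ^ 2 + μs * ℓ ^ 2 / μ := by
    rw [hPg]
    have h1 : x ⬝ᵥ (P *ᵥ gv) ≤ μs * eucNorm x * eucNorm gv := hbil x gv
    have h2 : μs * eucNorm x * eucNorm gv ≤ μs * eucNorm x * (ρ * eucNorm x + ℓ) :=
      mul_le_mul_of_nonneg_left hg (mul_nonneg hμs0 hnx0)
    have hy : 2 * eucNorm x * ℓ ≤ μ * eucNorm x ^ 2 + ℓ ^ 2 / μ := young _ _ _ hμ
    have hfin : μs * (2 * eucNorm x * ℓ) ≤ μs * (μ * eucNorm x ^ 2 + ℓ ^ 2 / μ) :=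
      mul_le_mul_of_nonneg_left hy hμs0
    have heq : μs * (μ * eucNorm x ^ 2 + ℓ ^ 2 / μ)
        = μs * μ * eucNorm x ^ 2 + μs * ℓ ^ 2 / μ := by
      field_simp
    rw [heq] at hfin
    have heq2 : 2 * (μs * eucNorm x * (ρ * eucNorm x + ℓ))
        = 2 * μs * ρ * eucNorm x ^ 2 + μs * (2 * eucNorm x * ℓ) := by ring
    linarith
  -- w cross term
  have hw' : 2 * ((P *ᵥ x) ⬝ᵥ wv)
      ≤ (ρ - μ) * eucNorm x ^ 2 + μs ^ 2 * wmax ^ 2 / (ρ - μ) := by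
    rw [hPw]
    have hρμ : (0:ℝ) < ρ - μ := by linarith
    have h1 : x ⬝ᵥ (P *ᵥ wv) ≤ μs * eucNorm x * eucNorm wv := hbil x wv
    have hy : 2 * eucNorm x * (μs * eucNorm wv)
        ≤ (ρ - μ) * eucNorm x ^ 2 + (μs * eucNorm wv) ^ 2 / (ρ - μ) :=
      young _ _ _ hρμ
    have h2 : (μs * eucNorm wv) ^ 2 ≤ μs ^ 2 * wmax ^ 2 := by
      have hnww : eucNorm wv ^ 2 ≤ wmax ^ 2 := pow_le_pow_left₀ hnw0 hwv 2
      calc (μs * eucNorm wv) ^ 2 = μs ^ 2 * eucNorm wv ^ 2 := by ring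
        _ ≤ μs ^ 2 * wmax ^ 2 := mul_le_mul_of_nonneg_left hnww (sq_nonneg _)
    have h3 : (μs * eucNorm wv) ^ 2 / (ρ - μ) ≤ μs ^ 2 * wmax ^ 2 / (ρ - μ) := by
      gcongr
    linarith
  have hsplit : 2 * ((P *ᵥ x) ⬝ᵥ (A *ᵥ x + gv + wv))
      = 2 * ((P *ᵥ x) ⬝ᵥ (A *ᵥ x)) + 2 * ((P *ᵥ x) ⬝ᵥ gv) + 2 * ((P *ᵥ x) ⬝ᵥ wv) := by
    simp only [dotProduct_add]; ring
  rw [hsplit]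
  linarith
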